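/- For every i ∈ {1,…,n}, every j ∈ {0,1}, and every continuous function f : B → ℝ on the unit cube B with f(x)/(xᵀx) bounded on B ∖ {0}, the weighted gain bound sup_{x ∈ B, x ≠ 0} |(g_{i,j} f)(x)| / (xᵀx) ≤ sup_{x ∈ B, x ≠ 0} |f(x)| / (xᵀx) holds. -/

import Mathlib

/-- The unit cube `B = {x ∈ ℝⁿ : ‖x‖_∞ ≤ 1}`. -/
def cubeB (n : ℕ) : Set (Fin n → ℝ) := {x | ∀ i, |x i| ≤ 1}

/-- The squared Euclidean norm `xᵀx = ∑ₖ x_k²`. -/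
def sqnorm (n : ℕ) (x : Fin n → ℝ) : ℝ := ∑ k, x k ^ 2

/-- The operator `g_{i,j}`: for `j = 0`, evaluation at `x_i = 0`; for `j = 1`,
integration `∫₀^{x_i}` in the `i`-th variable. -/
noncomputable def gop (n : ℕ) (i : Fin n) (j : ℕ) (h : (Fin n → ℝ) → ℝ) :
    (Fin n → ℝ) → ℝ :=
  fun x => if j = 0 then h (Function.update x i 0)
    else ∫ s in (0:ℝ)..(x i), h (Function.update x i s)

lemma sqnorm_nonneg (n : ℕ) (x : Fin n → ℝ) : 0 ≤ sqnorm n x :=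
  Finset.sum_nonneg fun k _ => sq_nonneg _

lemma sqnorm_pos (n : ℕ) {x : Fin n → ℝ} (hx : x ≠ 0) : 0 < sqnorm n x := by
  rcases lt_or_eq_of_le (sqnorm_nonneg n x) with h | h
  · exact h
  · exfalso
    apply hx
    funext k
    have := (Finset.sum_eq_zero_iff_of_nonneg (fun k _ => sq_nonneg (x k))).mp h.symm
      k (Finset.mem_univ k)
    exact pow_eq_zero_iff (by norm_num) |>.mp this

lemma update_mem_cubeB {n : ℕ} {x : Fin n → ℝ} (hx : x ∈ cubeB n) (i : Fin n)
    {s : ℝ} (hs : |s| ≤ 1) : Function.update x i s ∈ cubeB n := by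
  intro k
  by_cases hk : k = i
  · subst hk; simpa using hs
  · simpa [Function.update_of_ne hk] using hx k

lemma sqnorm_update_le {n : ℕ} (x : Fin n → ℝ) (i : Fin n)
    {s : ℝ} (hs : |s| ≤ |x i|) : sqnorm n (Function.update x i s) ≤ sqnorm n x := by
  apply Finset.sum_le_sum
  intro k _
  by_cases hk : k = i
  · subst hk
    simp only [Function.update_self]
    calc s ^ 2 = |s| ^ 2 := (sq_abs s).symm
      _ ≤ |x k| ^ 2 := pow_le_pow_left₀ (abs_nonneg _) hs 2
      _ = x k ^ 2 := sq_abs _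
  · simp [Function.update_of_ne hk]

/-- for every `i ∈ {1,…,n}`, `j ∈ {0,1}` and every continuous
`f : B → ℝ` with `f(x)/(xᵀx)` bounded on `B ∖ {0}`, the weighted gain bound
`sup_{x ∈ B, x ≠ 0} |(g_{i,j} f)(x)|/(xᵀx) ≤ sup_{x ∈ B, x ≠ 0} |f(x)|/(xᵀx)`
holds. -/
theorem gop_weighted_gain (n : ℕ) (i : Fin n) (j : ℕ) (hj : j = 0 ∨ j = 1)
    (f : (Fin n → ℝ) → ℝ) (hf : ContinuousOn f (cubeB n))
    (hbd : ∃ C : ℝ, ∀ x ∈ cubeB n \ {0}, |f x| / sqnorm n x ≤ C) :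
    sSup ((fun x => |gop n i j f x| / sqnorm n x) '' (cubeB n \ {0})) ≤
      sSup ((fun x => |f x| / sqnorm n x) '' (cubeB n \ {0})) := by
  rcases (cubeB n \ {0}).eq_empty_or_nonempty with hE | hne
  · simp [hE]
  obtain ⟨C, hC⟩ := hbd
  set A := (fun x => |f x| / sqnorm n x) '' (cubeB n \ {0}) with hA
  set M := sSup A with hM
  have hAbdd : BddAbove A := by
    refine ⟨C, ?_⟩
    rintro _ ⟨x, hx, rfl⟩
    exact hC x hx
  have hM0 : 0 ≤ M := by
    refine Real.sSup_nonneg ?_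
    rintro _ ⟨x, hx, rfl⟩
    exact div_nonneg (abs_nonneg _) (sqnorm_nonneg n x)
  -- Fin n is nonempty
  obtain ⟨x₀, hx₀B, hx₀0⟩ := id hne
  have hx₀0' : x₀ ≠ 0 := hx₀0
  have hFin : Nonempty (Fin n) := by
    by_contra h
    exact hx₀0' (funext fun k => absurd ⟨k⟩ h)
  obtain ⟨k₀⟩ := hFin
  have h0B : (0 : Fin n → ℝ) ∈ cubeB n := fun k => by simp
  -- the pointwise bound with constant C
  have hCb : ∀ y ∈ cubeB n, y ≠ 0 → |f y| ≤ C * sqnorm n y := fun y hy hy0 =>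
    (div_le_iff₀ (sqnorm_pos n hy0)).mp (hC y ⟨hy, hy0⟩)
  -- f 0 = 0
  have hf0 : f 0 = 0 := by
    set z : ℕ → (Fin n → ℝ) := fun m _ => 1 / (m + 1 : ℝ) with hz
    have hzpos : ∀ m : ℕ, (0 : ℝ) < 1 / (m + 1 : ℝ) := fun m => by positivity
    have hzB : ∀ m, z m ∈ cubeB n := by
      intro m k
      rw [abs_of_pos (hzpos m)]
      rw [div_le_one (by positivity)]
      linarith [Nat.cast_nonneg (α := ℝ) m]
    have hz0 : ∀ m, z m ≠ 0 := by
      intro m h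
      have := congrFun h k₀
      simp only [hz, Pi.zero_apply] at this
      exact absurd this (ne_of_gt (hzpos m))
    have hzt : Filter.Tendsto z Filter.atTop (nhds 0) := by
      rw [tendsto_pi_nhds]
      intro k
      simpa [hz] using (tendsto_one_div_add_atTop_nhds_zero_nat (𝕜 := ℝ))
    have hztw : Filter.Tendsto z Filter.atTop (nhdsWithin 0 (cubeB n)) :=
      tendsto_nhdsWithin_of_tendsto_nhds_of_eventually_within z hzt
        (Filter.Eventually.of_forall hzB)
    have hfzt : Filter.Tendsto (fun m => |f (z m)|) Filter.atTop (nhds |f 0|) :=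
      ((hf 0 h0B).tendsto.comp hztw).abs
    have hsq : ∀ m, sqnorm n (z m) = n * (1 / (m + 1 : ℝ)) ^ 2 := by
      intro m
      simp [sqnorm, hz, Finset.sum_const, Finset.card_univ, mul_comm]
    have hbt : Filter.Tendsto (fun m => C * sqnorm n (z m)) Filter.atTop (nhds 0) := by
      simp only [hsq]
      have : Filter.Tendsto (fun m : ℕ => (1 / (m + 1 : ℝ)) ^ 2) Filter.atTop (nhds 0) := by
        simpa using (tendsto_one_div_add_atTop_nhds_zero_nat (𝕜 := ℝ)).pow 2
      simpa using (this.const_mul ((n : ℝ))).const_mul C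
    have hle : |f 0| ≤ 0 :=
      le_of_tendsto_of_tendsto' hfzt hbt fun m => hCb (z m) (hzB m) (hz0 m)
    exact abs_nonpos_iff.mp hle
  -- key pointwise bound
  have key : ∀ y ∈ cubeB n, |f y| ≤ M * sqnorm n y := by
    intro y hy
    by_cases hy0 : y = 0
    · subst hy0
      simp [hf0]
      exact mul_nonneg hM0 (sqnorm_nonneg n 0)
    · have hmem : |f y| / sqnorm n y ∈ A := ⟨y, ⟨hy, hy0⟩, rfl⟩
      have := le_csSup hAbdd hmem
      calc |f y| = |f y| / sqnorm n y * sqnorm n y :=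
            (div_mul_cancel₀ _ (sqnorm_pos n hy0).ne').symm
        _ ≤ M * sqnorm n y :=
            mul_le_mul_of_nonneg_right this (sqnorm_nonneg n y)
  -- main estimate
  apply csSup_le (hne.image _)
  rintro _ ⟨x, hx, rfl⟩
  obtain ⟨hxB, hx0⟩ := hx
  have hx0' : x ≠ 0 := hx0
  have hpos := sqnorm_pos n hx0'
  rw [div_le_iff₀ hpos]
  rcases hj with hj | hj
  · -- j = 0
    subst hj
    simp only [gop, if_pos rfl]
    have h1 : Function.update x i 0 ∈ cubeB n := update_mem_cubeB hxB i (by simp)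
    calc |f (Function.update x i 0)| ≤ M * sqnorm n (Function.update x i 0) := key _ h1
      _ ≤ M * sqnorm n x :=
          mul_le_mul_of_nonneg_left (sqnorm_update_le x i (by simp)) hM0
  · -- j = 1
    subst hj
    simp only [gop, if_neg (by norm_num : (1:ℕ) ≠ 0)]
    have hbound : ∀ s ∈ Set.uIoc (0:ℝ) (x i),
        ‖f (Function.update x i s)‖ ≤ M * sqnorm n x := by
      intro s hs
      have habs : |s| ≤ |x i| := by
        rw [Set.uIoc] at hs
        rw [abs_le]
        constructor
        · have : -|x i| ≤ min 0 (x i) := le_min (by simp [abs_nonneg]) (neg_abs_le _)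
          linarith [hs.1]
        · exact hs.2.trans (max_le (abs_nonneg _) (le_abs_self _))
      have h1 : Function.update x i s ∈ cubeB n :=
        update_mem_cubeB hxB i (habs.trans (hxB i))
      calc ‖f (Function.update x i s)‖ = |f (Function.update x i s)| := rfl
        _ ≤ M * sqnorm n (Function.update x i s) := key _ h1
        _ ≤ M * sqnorm n x :=
            mul_le_mul_of_nonneg_left (sqnorm_update_le x i habs) hM0
    have h2 := intervalIntegral.norm_integral_le_of_norm_le_const hbound
    calc |∫ s in (0:ℝ)..(x i), f (Function.update x i s)| ≤ M * sqnorm n x * |x i - 0| := h2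
      _ ≤ M * sqnorm n x * 1 := by
          apply mul_le_mul_of_nonneg_left _ (mul_nonneg hM0 hpos.le)
          simpa using hxB i
      _ = M * sqnorm n x := mul_one _
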